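/- For every c ∈ ℝ, the integral identity ∫₀^∞ r⁴ e^{r²+c}/(e^{r²+c}+1)² dr = (3/2) ∫₀^∞ r²/(e^{r²+c}+1) dr holds. -/

import Mathlib

open Real MeasureTheory Set Filter Topology

private lemma denom_pos (c x : ℝ) : 0 < exp (x ^ 2 + c) + 1 := by positivity

private lemma intOn1 (c : ℝ) :
    IntegrableOn (fun r : ℝ => r ^ 4 * exp (r ^ 2 + c) / (exp (r ^ 2 + c) + 1) ^ 2)
      (Ioi (0:ℝ)) := by
  have hg : IntegrableOn (fun r : ℝ => exp (-c) * (r ^ (4:ℝ) * exp (-1 * r ^ 2)))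
      (Ioi (0:ℝ)) :=
    (integrableOn_rpow_mul_exp_neg_mul_sq one_pos (by norm_num)).const_mul _
  refine hg.mono' ?_ ?_
  · apply Continuous.aestronglyMeasurable
    exact (continuous_pow 4 |>.mul (by continuity)).div (by continuity)
      (fun x => by positivity)
  · filter_upwards [ae_restrict_mem measurableSet_Ioi] with x hx
    have hx0 : (0:ℝ) < x := hx
    have h1 : exp (x ^ 2 + c) / (exp (x ^ 2 + c) + 1) ^ 2 ≤ exp (-(x ^ 2 + c)) := by
      rw [exp_neg, div_le_iff₀ (by positivity)]
      rw [inv_mul_eq_div, le_div_iff₀ (exp_pos _)]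
      have : exp (x ^ 2 + c) * exp (x ^ 2 + c) ≤ (exp (x ^ 2 + c) + 1) ^ 2 := by nlinarith [exp_pos (x ^ 2 + c)]
      linarith
    have habs : |x ^ 4 * exp (x ^ 2 + c) / (exp (x ^ 2 + c) + 1) ^ 2|
        = x ^ 4 * (exp (x ^ 2 + c) / (exp (x ^ 2 + c) + 1) ^ 2) := by
      rw [abs_of_nonneg (by positivity), mul_div_assoc]
    rw [Real.norm_eq_abs, habs]
    rw [show (x:ℝ) ^ (4:ℝ) = x ^ (4:ℕ) by norm_cast]
    calc x ^ 4 * (exp (x ^ 2 + c) / (exp (x ^ 2 + c) + 1) ^ 2)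
        ≤ x ^ 4 * exp (-(x ^ 2 + c)) := by gcongr
      _ = exp (-c) * (x ^ 4 * exp (-1 * x ^ 2)) := by
          rw [show -(x^2+c) = (-1 * x^2) + (-c) by ring, exp_add]; ring

private lemma intOn2 (c : ℝ) :
    IntegrableOn (fun r : ℝ => r ^ 2 / (exp (r ^ 2 + c) + 1)) (Ioi (0:ℝ)) := by
  have hg : IntegrableOn (fun r : ℝ => exp (-c) * (r ^ (2:ℝ) * exp (-1 * r ^ 2)))
      (Ioi (0:ℝ)) :=
    (integrableOn_rpow_mul_exp_neg_mul_sq one_pos (by norm_num)).const_mul _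
  refine hg.mono' ?_ ?_
  · apply Continuous.aestronglyMeasurable
    exact (continuous_pow 2).div (by continuity) (fun x => by positivity)
  · filter_upwards [ae_restrict_mem measurableSet_Ioi] with x hx
    have hx0 : (0:ℝ) < x := hx
    have h1 : (exp (x ^ 2 + c) + 1)⁻¹ ≤ exp (-(x ^ 2 + c)) := by
      rw [exp_neg]
      exact inv_anti₀ (exp_pos _) (by linarith)
    rw [Real.norm_eq_abs, abs_of_nonneg (by positivity)]
    rw [show (x:ℝ) ^ (2:ℝ) = x ^ (2:ℕ) by norm_cast]
    calc x ^ 2 / (exp (x ^ 2 + c) + 1) = x ^ 2 * (exp (x ^ 2 + c) + 1)⁻¹ := by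
          rw [div_eq_mul_inv]
      _ ≤ x ^ 2 * exp (-(x ^ 2 + c)) := by gcongr
      _ = exp (-c) * (x ^ 2 * exp (-1 * x ^ 2)) := by
          rw [show -(x^2+c) = (-1 * x^2) + (-c) by ring, exp_add]; ring

theorem stmt_0 (c : ℝ) :
    ∫ r in Set.Ioi (0:ℝ), r ^ 4 * exp (r ^ 2 + c) / (exp (r ^ 2 + c) + 1) ^ 2 =
      (3 / 2) * ∫ r in Set.Ioi (0:ℝ), r ^ 2 / (exp (r ^ 2 + c) + 1) := by
  set G : ℝ → ℝ := fun x => x ^ 3 / 2 / (exp (x ^ 2 + c) + 1) with hG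
  set f' : ℝ → ℝ := fun x => 3 / 2 * (x ^ 2 / (exp (x ^ 2 + c) + 1))
      - x ^ 4 * exp (x ^ 2 + c) / (exp (x ^ 2 + c) + 1) ^ 2 with hf'
  have hderiv : ∀ x ∈ Ici (0:ℝ), HasDerivAt G (f' x) x := by
    intro x _
    have hu : HasDerivAt (fun x : ℝ => x ^ 3 / 2) (3 * x ^ 2 / 2) x :=
      (hasDerivAt_pow 3 x).div_const 2
    have hv : HasDerivAt (fun x : ℝ => exp (x ^ 2 + c) + 1)
        (exp (x ^ 2 + c) * (2 * x)) x := by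
      have : HasDerivAt (fun x : ℝ => x ^ 2 + c) (2 * x) x := by
        simpa using (hasDerivAt_pow 2 x).add_const c
      simpa using (this.exp.add_const 1)
    have := hu.div hv (by positivity)
    refine this.congr_deriv ?_; symm
    rw [hf', eq_div_iff (by positivity : ((exp (x ^ 2 + c) + 1) ^ 2) ≠ 0)]
    field_simp
  have h'int : IntegrableOn f' (Ioi (0:ℝ)) :=
    ((intOn2 c).const_mul (3/2)).sub (intOn1 c)
  have htend : Tendsto G atTop (𝓝 0) := by
    have hO : (fun x : ℝ => x ^ (3:ℝ) * exp (-1 * x ^ 2)) =o[atTop]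
        fun x => exp (-(1/2) * x) := rpow_mul_exp_neg_mul_sq_isLittleO_exp_neg one_pos 3
    have hden : Tendsto (fun x : ℝ => exp (-(1/2) * x)) atTop (𝓝 0) := by
      have h2 : Tendsto (fun x : ℝ => (1/2 : ℝ) * x) atTop atTop :=
        Tendsto.const_mul_atTop one_half_pos tendsto_id
      have h3 := tendsto_exp_neg_atTop_nhds_zero.comp h2
      rw [show (fun x : ℝ => exp (-(1/2) * x)) = (fun x => exp (-x)) ∘ (fun x : ℝ => (1/2:ℝ) * x) by
        funext x; simp [Function.comp, neg_mul]]
      exact h3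
    have h0 : Tendsto (fun x : ℝ => x ^ (3:ℝ) * exp (-1 * x ^ 2)) atTop (𝓝 0) :=
      hO.isBigO.trans_tendsto hden
    have h0' : Tendsto (fun x : ℝ => exp (-c) / 2 * (x ^ (3:ℝ) * exp (-1 * x ^ 2)))
        atTop (𝓝 0) := by simpa using h0.const_mul (exp (-c) / 2)
    apply squeeze_zero' (g := fun x => exp (-c) / 2 * (x ^ (3:ℝ) * exp (-1 * x ^ 2)))
      ?_ ?_ h0'
    · filter_upwards [eventually_ge_atTop (0:ℝ)] with x hx
      positivity
    · filter_upwards [eventually_ge_atTop (0:ℝ)] with x hx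
      rw [hG]
      have h1 : (exp (x ^ 2 + c) + 1)⁻¹ ≤ exp (-(x ^ 2 + c)) := by
        rw [exp_neg]
        exact inv_anti₀ (exp_pos _) (by linarith)
      calc x ^ 3 / 2 / (exp (x ^ 2 + c) + 1)
          = x ^ 3 / 2 * (exp (x ^ 2 + c) + 1)⁻¹ := by rw [div_eq_mul_inv]
        _ ≤ x ^ 3 / 2 * exp (-(x ^ 2 + c)) := by gcongr
        _ = exp (-c) / 2 * (x ^ (3:ℝ) * exp (-1 * x ^ 2)) := by
            rw [show (x:ℝ) ^ (3:ℝ) = x ^ (3:ℕ) by norm_cast,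
              show -(x^2+c) = (-1 * x^2) + (-c) by ring, exp_add]; ring
  have key : ∫ x in Ioi (0:ℝ), f' x = 0 - G 0 := by
    exact integral_Ioi_of_hasDerivAt_of_tendsto' hderiv h'int htend
  have hG0 : G 0 = 0 := by simp [hG]
  rw [hG0, sub_zero] at key
  have hsplit : ∫ x in Ioi (0:ℝ), f' x
      = (3/2) * (∫ r in Ioi (0:ℝ), r ^ 2 / (exp (r ^ 2 + c) + 1))
        - ∫ r in Ioi (0:ℝ), r ^ 4 * exp (r ^ 2 + c) / (exp (r ^ 2 + c) + 1) ^ 2 := by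
    rw [hf', integral_sub ((intOn2 c).const_mul (3/2)) (intOn1 c),
      integral_const_mul]
  rw [hsplit] at key
  linarith
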